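/- For all vectors a, b in ℝ^n and real p > 2, the function f(a) = (max(|a|² - 1, 0))^(p/2) satisfies the convexity (subgradient) inequality: (max(|a|² - 1, 0))^(p/2) ≥ (max(|b|² - 1, 0))^(p/2) + p · (max(|b|² - 1, 0))^(p/2 - 1) · ⟨b, a - b⟩, with the convention that (max(t,0))^(p/2-1) = 0 when t ≤ 0. -/

import Mathlib

open RealInnerProductSpace

lemma key_1d (q : ℝ) (hq : 1 < q) (x y : ℝ) :
    (max y 0) ^ q + q * (max y 0) ^ (q - 1) * (x - y) ≤ (max x 0) ^ q := by
  rcases le_or_gt y 0 with hy | hy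
  · rw [max_eq_right hy, Real.zero_rpow (by linarith), Real.zero_rpow (by linarith)]
    simpa using Real.rpow_nonneg (le_max_right x 0) q
  · rw [max_eq_left hy.le]
    have h2 : y ^ (q - 1) * y = y ^ q := by
      rw [← Real.rpow_add_one hy.ne', sub_add_cancel]
    rcases le_or_gt x 0 with hx | hx
    · rw [max_eq_right hx, Real.zero_rpow (by linarith)]
      have h1 : q * y ^ (q - 1) * (x - y) ≤ q * y ^ (q - 1) * (-y) := by
        apply mul_le_mul_of_nonneg_left (by linarith)
        positivity
      have h3 : (0:ℝ) < y ^ q := Real.rpow_pos_of_pos hy q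
      nlinarith
    · rw [max_eq_left hx.le]
      have hb := one_add_mul_self_le_rpow_one_add
        (s := x / y - 1) (by rw [le_sub_iff_add_le]; norm_num; positivity) (p := q) hq.le
      have h1 : (1 + (x / y - 1)) ^ q = x ^ q / y ^ q := by
        rw [show 1 + (x / y - 1) = x / y by ring, Real.div_rpow hx.le hy.le]
      rw [h1] at hb
      have hyq : (0:ℝ) < y ^ q := Real.rpow_pos_of_pos hy q
      have hmul := mul_le_mul_of_nonneg_right hb hyq.le
      rw [div_mul_cancel₀ _ hyq.ne'] at hmul
      have h3 : q * y ^ (q - 1) * (x - y) = q * (x / y - 1) * y ^ q := by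
        rw [← h2]; field_simp
      rw [h3]; nlinarith [hmul]

theorem stmt_0 (n : ℕ) (p : ℝ) (hp : 2 < p) (a b : EuclideanSpace ℝ (Fin n)) :
    (max (‖a‖ ^ 2 - 1) 0) ^ (p / 2) ≥
      (max (‖b‖ ^ 2 - 1) 0) ^ (p / 2) +
        p * (max (‖b‖ ^ 2 - 1) 0) ^ (p / 2 - 1) * ⟪b, a - b⟫ := by
  have hq : 1 < p / 2 := by linarith
  have hkey := key_1d (p / 2) hq (‖a‖ ^ 2 - 1) (‖b‖ ^ 2 - 1)
  have hdot : 2 * ⟪b, a - b⟫ ≤ ‖a‖ ^ 2 - ‖b‖ ^ 2 := by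
    have h1 : (0:ℝ) ≤ ‖a - b‖ ^ 2 := sq_nonneg _
    have h2 : ‖a - b‖ ^ 2 = ‖a‖ ^ 2 - 2 * ⟪a, b⟫ + ‖b‖ ^ 2 := norm_sub_sq_real a b
    have h3 : ⟪b, a - b⟫ = ⟪a, b⟫ - ‖b‖ ^ 2 := by
      rw [inner_sub_right, real_inner_self_eq_norm_sq, real_inner_comm]
    nlinarith
  have hc : (0:ℝ) ≤ (max (‖b‖ ^ 2 - 1) 0) ^ (p / 2 - 1) :=
    Real.rpow_nonneg (le_max_right _ 0) _
  have h6 := mul_le_mul_of_nonneg_left hdot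
    (mul_nonneg (by linarith : (0:ℝ) ≤ p / 2) hc)
  nlinarith [hkey, h6]
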